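/- Let v, w ∈ ℝ² with w ≠ v and w ≠ −v, and for δ ∈ ℝ let M_δ : ℝ² → ℝ² be the linear shear map M_δ(x, y) = (x + δy, y). Then the set { δ ∈ ℝ : ‖M_δ v‖ = ‖M_δ w‖ } has at most two elements, where ‖·‖ denotes the Euclidean norm. -/

import Mathlib

open MeasureTheory

noncomputable section

/-- The Euclidean plane. -/
abbrev Plane : Type := EuclideanSpace ℝ (Fin 2)

/-- A triangle is the convex hull of three affinely independent points. -/
def IsTriangle (T : Set Plane) : Prop :=
  ∃ p q r : Plane, AffineIndependent ℝ ![p, q, r] ∧ T = convexHull ℝ {p, q, r}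

/-- Two subsets of the plane are congruent if one is the image of the other under
an isometry of the plane (reflections allowed). -/
def PlaneCongruent (A B : Set Plane) : Prop :=
  ∃ f : Plane ≃ᵢ Plane, f '' A = B

/-- A tiling of `A ⊆ ℝ²`: a countable collection of compact sets whose interiors are
pairwise disjoint and whose union is `A`. -/
def IsTilingOf (𝒯 : Set (Set Plane)) (A : Set Plane) : Prop :=
  𝒯.Countable ∧ (∀ T ∈ 𝒯, IsCompact T) ∧
    (∀ T ∈ 𝒯, ∀ T' ∈ 𝒯, T ≠ T' → interior T ∩ interior T' = ∅) ∧
    ⋃₀ 𝒯 = A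

/-- A vertex of a (convex polygonal) tile is an extreme point of it. -/
def IsVertexOf (p : Plane) (T : Set Plane) : Prop := p ∈ Set.extremePoints ℝ T

/-- An edge of a convex polygon: a nondegenerate segment between two vertices that
lies in the frontier of the polygon. -/
def IsEdgeOf (e : Set Plane) (T : Set Plane) : Prop :=
  ∃ u v : Plane, u ≠ v ∧ IsVertexOf u T ∧ IsVertexOf v T ∧
    e = segment ℝ u v ∧ e ⊆ frontier T

/-- A tiling by convex polygons is vertex-to-vertex if the intersection of any two
distinct tiles is empty, a common vertex, or a common entire edge. -/
def IsVertexToVertex (𝒯 : Set (Set Plane)) : Prop :=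
  ∀ T ∈ 𝒯, ∀ T' ∈ 𝒯, T ≠ T' →
    T ∩ T' = ∅ ∨
    (∃ p : Plane, T ∩ T' = {p} ∧ IsVertexOf p T ∧ IsVertexOf p T') ∨
    (IsEdgeOf (T ∩ T') T ∧ IsEdgeOf (T ∩ T') T')

/-- A convex polygon with exactly `n` vertices: a compact convex set whose set of
extreme points is finite with exactly `n` elements. -/
def IsConvexPolygon (n : ℕ) (T : Set Plane) : Prop :=
  IsCompact T ∧ Convex ℝ T ∧ (Set.extremePoints ℝ T).Finite ∧
    (Set.extremePoints ℝ T).ncard = n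

/-- `A ≃ B`: `B` is the image of `A` under `z ↦ s·z + t` with `s ∈ {1, -1}`. -/
def TransCong (A B : Set Plane) : Prop :=
  ∃ s : ℝ, (s = 1 ∨ s = -1) ∧ ∃ t : Plane, B = (fun z => s • z + t) '' A

/-- The shear map `M_δ (x, y) = (x + δy, y)`. -/
def shear (δ : ℝ) (p : Plane) : Plane :=
  (WithLp.equiv 2 (Fin 2 → ℝ)).symm ![p 0 + δ * p 1, p 1]

/-- If `w ≠ v` and `w ≠ −v`, then the set of shear parameters `δ` with
`‖M_δ v‖ = ‖M_δ w‖` has at most two elements. -/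
theorem statement15 (v w : Plane) (hvw : w ≠ v) (hvw' : w ≠ -v) :
    {δ : ℝ | ‖shear δ v‖ = ‖shear δ w‖}.encard ≤ 2 := by
  have hnorm : ∀ (δ : ℝ) (u : Plane), ‖shear δ u‖^2 = (u 0 + δ * u 1)^2 + (u 1)^2 := by
    intro δ u
    rw [shear, EuclideanSpace.norm_eq, Real.sq_sqrt (by positivity)]
    simp [Fin.sum_univ_two, sq_abs]
  set a : ℝ := v 1 ^ 2 - w 1 ^ 2 with ha
  set b : ℝ := 2 * (v 0 * v 1 - w 0 * w 1) with hb
  set c : ℝ := v 0 ^ 2 + v 1 ^ 2 - w 0 ^ 2 - w 1 ^ 2 with hc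
  set p : Polynomial ℝ := Polynomial.C a * Polynomial.X ^ 2 + Polynomial.C b * Polynomial.X + Polynomial.C c with hp
  have h1 : ¬(w 0 = v 0 ∧ w 1 = v 1) := by
    rintro ⟨e0, e1⟩
    exact hvw (by ext i; fin_cases i <;> simp [e0, e1])
  have h2 : ¬(w 0 = -v 0 ∧ w 1 = -v 1) := by
    rintro ⟨e0, e1⟩
    exact hvw' (by ext i; fin_cases i <;> simp [e0, e1])
  have hpne : p ≠ 0 := by
    intro h0
    have ca : a = 0 := by
      have := congrArg (fun q => Polynomial.coeff q 2) h0
      simpa [hp] using this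
    have cb : b = 0 := by
      have := congrArg (fun q => Polynomial.coeff q 1) h0
      simpa [hp] using this
    have cc : c = 0 := by
      have := congrArg (fun q => Polynomial.coeff q 0) h0
      simpa [hp] using this
    have e0 : (w 0 - v 0) * (w 0 + v 0) = 0 := by nlinarith [ca, cc]
    have e1 : (w 1 - v 1) * (w 1 + v 1) = 0 := by nlinarith [ca]
    rcases mul_eq_zero.1 e0 with k0 | k0 <;> rcases mul_eq_zero.1 e1 with k1 | k1
    · exact h1 ⟨by linarith, by linarith⟩
    · -- w0 = v0, w1 = -v1 : from b: v0 v1 = -v0 v1 ⇒ v0 v1 = 0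
      have hw0 : w 0 = v 0 := by linarith
      have hw1 : w 1 = -v 1 := by linarith
      have cb' : 2 * (v 0 * v 1 - w 0 * w 1) = 0 := by rw [← hb]; exact cb
      rw [hw0, hw1] at cb'
      have : v 0 * v 1 = 0 := by linear_combination cb' / 4
      rcases mul_eq_zero.1 this with hz | hz
      · exact h2 ⟨by linarith, by linarith⟩
      · exact h1 ⟨by linarith, by linarith⟩
    · have hw0 : w 0 = -v 0 := by linarith
      have hw1 : w 1 = v 1 := by linarith
      have cb' : 2 * (v 0 * v 1 - w 0 * w 1) = 0 := by rw [← hb]; exact cb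
      rw [hw0, hw1] at cb'
      have : v 0 * v 1 = 0 := by linear_combination cb' / 4
      rcases mul_eq_zero.1 this with hz | hz
      · exact h1 ⟨by linarith, by linarith⟩
      · exact h2 ⟨by linarith, by linarith⟩
    · exact h2 ⟨by linarith, by linarith⟩
  have hsub : {δ : ℝ | ‖shear δ v‖ = ‖shear δ w‖} ⊆ ↑p.roots.toFinset := by
    intro δ hδ
    have hsq : ‖shear δ v‖^2 = ‖shear δ w‖^2 := by rw [Set.mem_setOf_eq] at hδ; rw [hδ]
    rw [hnorm, hnorm] at hsq
    have : p.eval δ = 0 := by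
      simp only [hp, Polynomial.eval_add, Polynomial.eval_mul, Polynomial.eval_pow,
        Polynomial.eval_C, Polynomial.eval_X, ha, hb, hc]
      nlinarith [hsq]
    simp only [Finset.coe_sort_coe, Multiset.mem_toFinset, Finset.mem_coe]
    exact (Polynomial.mem_roots hpne).2 this
  calc {δ : ℝ | ‖shear δ v‖ = ‖shear δ w‖}.encard ≤ (↑p.roots.toFinset : Set ℝ).encard :=
        Set.encard_le_encard hsub
    _ = p.roots.toFinset.card := Set.encard_coe_eq_coe_finsetCard _
    _ ≤ (p.roots.card : ℕ∞) := by exact_mod_cast Multiset.toFinset_card_le _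
    _ ≤ (p.natDegree : ℕ∞) := by exact_mod_cast p.card_roots' 
    _ ≤ 2 := by
        have := Polynomial.natDegree_quadratic_le (a := a) (b := b) (c := c)
        exact_mod_cast this
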